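/- Let n ≥ 1, let μ be a (Borel) measure on ℝ^{n+1}, let x ∈ ℝ^{n+1}, and let θ ≥ 0. Suppose that μ(B(x, s)) ≤ θ · ω_n · s^n for every s > 0, where B(x, s) is the closed ball of radius s centered at x and ω_n is the Lebesgue measure of the unit ball in ℝ^n. Then for every r > 0, ∫_{ℝ^{n+1}} (4πr²)^{−n/2} · e^{−‖y − x‖²/(4r²)} dμ(y) ≤ θ. -/

import Mathlib

open MeasureTheory Metric

/-- Area ratios bound Gaussian density ratios: if `μ(B(x,s)) ≤ θ · ω_n · s^n` for all `s > 0`,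
where `ω_n` is the Lebesgue measure of the unit ball in `ℝ^n`, then every Gaussian density
ratio of `μ` at `x` is at most `θ`. -/
theorem stmt_3 (n : ℕ) (hn : 1 ≤ n) (μ : Measure (EuclideanSpace ℝ (Fin (n + 1))))
    (x : EuclideanSpace ℝ (Fin (n + 1))) (θ : ℝ) (hθ : 0 ≤ θ)
    (hratio : ∀ s > 0, μ (closedBall x s)
      ≤ ENNReal.ofReal (θ * (volume (closedBall (0 : EuclideanSpace ℝ (Fin n)) 1)).toReal
          * s ^ n))
    (r : ℝ) (hr : 0 < r) :
    ∫⁻ y, ENNReal.ofReal ((4 * Real.pi * r ^ 2) ^ (-(n : ℝ) / 2)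
        * Real.exp (-‖y - x‖ ^ 2 / (4 * r ^ 2))) ∂μ ≤ ENNReal.ofReal θ := by
  have hπ : 0 < Real.pi := Real.pi_pos
  set c : ℝ := (4 * Real.pi * r ^ 2) ^ (-(n : ℝ) / 2) with hc_def
  have hc : 0 < c := Real.rpow_pos_of_pos (by positivity) _
  set s : ℝ → ℝ := fun t => Real.sqrt (4 * r ^ 2 * Real.log (c / t)) with hs_def
  have h4 : (0:ℝ) < 4 * r ^ 2 := by positivity
  have key : ∀ t, 0 < t → ∀ d : ℝ, 0 ≤ d →
      (t < c * Real.exp (-d ^ 2 / (4 * r ^ 2)) ↔ d < s t) := by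
    intro t ht d hd
    show _ ↔ d < Real.sqrt _
    rw [Real.lt_sqrt hd, mul_comm (4 * r ^ 2), ← div_lt_iff₀ h4, mul_comm c, ← div_lt_iff₀ hc,
      ← Real.log_lt_iff_lt_exp (by positivity), show t/c = (c/t)⁻¹ by rw [inv_div], Real.log_inv,
      neg_div, neg_lt_neg_iff]
  -- layer cake for μ
  have L1 : ∫⁻ y, ENNReal.ofReal (c * Real.exp (-‖y - x‖ ^ 2 / (4 * r ^ 2))) ∂μ
      = ∫⁻ t in Set.Ioi (0:ℝ), μ {y | t < c * Real.exp (-‖y - x‖ ^ 2 / (4 * r ^ 2))} := by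
    apply lintegral_eq_lintegral_meas_lt μ
      (Filter.Eventually.of_forall fun y => by positivity)
    exact Continuous.aemeasurable (by fun_prop)
  -- layer cake for volume on ℝ^n
  have L2 : ∫⁻ z : EuclideanSpace ℝ (Fin n),
        ENNReal.ofReal (c * Real.exp (-‖z‖ ^ 2 / (4 * r ^ 2)))
      = ∫⁻ t in Set.Ioi (0:ℝ),
        volume {z : EuclideanSpace ℝ (Fin n) | t < c * Real.exp (-‖z‖ ^ 2 / (4 * r ^ 2))} := by
    apply lintegral_eq_lintegral_meas_lt volume
      (Filter.Eventually.of_forall fun z => by positivity)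
    exact Continuous.aemeasurable (by fun_prop)
  -- pointwise comparison of level-set measures
  have comp : ∀ t ∈ Set.Ioi (0:ℝ),
      μ {y | t < c * Real.exp (-‖y - x‖ ^ 2 / (4 * r ^ 2))}
        ≤ ENNReal.ofReal θ *
          volume {z : EuclideanSpace ℝ (Fin n) | t < c * Real.exp (-‖z‖ ^ 2 / (4 * r ^ 2))} := by
    intro t ht
    rw [Set.mem_Ioi] at ht
    have e1 : {y | t < c * Real.exp (-‖y - x‖ ^ 2 / (4 * r ^ 2))} = ball x (s t) := by
      ext y
      simp only [Set.mem_setOf_eq, mem_ball, dist_eq_norm]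
      exact key t ht ‖y - x‖ (norm_nonneg _)
    have e2 : {z : EuclideanSpace ℝ (Fin n) | t < c * Real.exp (-‖z‖ ^ 2 / (4 * r ^ 2))}
        = ball (0 : EuclideanSpace ℝ (Fin n)) (s t) := by
      ext z
      simp only [Set.mem_setOf_eq, mem_ball, dist_zero_right]
      exact key t ht ‖z‖ (norm_nonneg _)
    rw [e1, e2]
    rcases le_or_gt (s t) 0 with hst | hst
    · rw [ball_eq_empty.2 hst]
      simp
    · calc μ (ball x (s t)) ≤ μ (closedBall x (s t)) := measure_mono ball_subset_closedBall
        _ ≤ ENNReal.ofReal (θ * (volume (closedBall (0 : EuclideanSpace ℝ (Fin n)) 1)).toReal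
              * s t ^ n) := hratio (s t) hst
        _ = ENNReal.ofReal θ * volume (ball (0 : EuclideanSpace ℝ (Fin n)) (s t)) := by
            rw [Measure.addHaar_ball_of_pos volume _ hst, finrank_euclideanSpace_fin,
              ← Measure.addHaar_unitClosedBall_eq_addHaar_unitBall]
            rw [ENNReal.ofReal_mul (by positivity), ENNReal.ofReal_mul hθ,
              ENNReal.ofReal_toReal measure_closedBall_lt_top.ne, mul_assoc,
              mul_comm (volume (closedBall (0 : EuclideanSpace ℝ (Fin n)) 1))]
  -- Gaussian integral over ℝ^n equals 1
  have hb : (0:ℝ) < 1 / (4 * r ^ 2) := by positivity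
  have hexp_eq : ∀ z : EuclideanSpace ℝ (Fin n),
      c * Real.exp (-‖z‖ ^ 2 / (4 * r ^ 2)) = c * Real.exp (-(1/(4*r^2)) * ‖z‖ ^ 2) := by
    intro z; ring_nf
  have hint : Integrable (fun z : EuclideanSpace ℝ (Fin n) =>
      Real.exp (-(1/(4*r^2)) * ‖z‖ ^ 2)) := by
    have := (GaussianFourier.integrable_cexp_neg_mul_sq_norm_add (V := EuclideanSpace ℝ (Fin n))
      (b := ((1/(4*r^2) : ℝ) : ℂ)) (by rw [Complex.ofReal_re]; exact hb) 0 0).norm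
    refine this.congr (Filter.Eventually.of_forall fun z => ?_)
    have h : (-(((1 / (4 * r ^ 2) : ℝ)) : ℂ) * ((‖z‖ : ℝ) : ℂ) ^ 2
          + 0 * (((inner ℝ (0 : EuclideanSpace ℝ (Fin n)) z : ℝ)) : ℂ))
        = ((-(1 / (4 * r ^ 2)) * ‖z‖ ^ 2 : ℝ) : ℂ) := by push_cast; ring
    dsimp only
    rw [h, Complex.norm_exp_ofReal]
  have hG : ∫ z : EuclideanSpace ℝ (Fin n), c * Real.exp (-‖z‖ ^ 2 / (4 * r ^ 2)) = 1 := by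
    simp_rw [hexp_eq]
    rw [MeasureTheory.integral_const_mul, GaussianFourier.integral_rexp_neg_mul_sq_norm hb, finrank_euclideanSpace_fin]
    rw [hc_def, div_div_eq_mul_div, div_one,
      show Real.pi * (4 * r ^ 2) = 4 * Real.pi * r ^ 2 by ring,
      ← Real.rpow_add (by positivity), show (-(n:ℝ)/2 + (n:ℝ)/2) = 0 by ring, Real.rpow_zero]
  have hGl : ∫⁻ z : EuclideanSpace ℝ (Fin n),
      ENNReal.ofReal (c * Real.exp (-‖z‖ ^ 2 / (4 * r ^ 2))) = 1 := by
    rw [← ofReal_integral_eq_lintegral_ofReal]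
    · rw [hG]; simp
    · simp_rw [hexp_eq]; exact hint.const_mul c
    · exact Filter.Eventually.of_forall fun z => by positivity
  calc ∫⁻ y, ENNReal.ofReal (c * Real.exp (-‖y - x‖ ^ 2 / (4 * r ^ 2))) ∂μ
      = ∫⁻ t in Set.Ioi (0:ℝ), μ {y | t < c * Real.exp (-‖y - x‖ ^ 2 / (4 * r ^ 2))} := L1
    _ ≤ ∫⁻ t in Set.Ioi (0:ℝ), ENNReal.ofReal θ *
          volume {z : EuclideanSpace ℝ (Fin n) | t < c * Real.exp (-‖z‖ ^ 2 / (4 * r ^ 2))} :=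
        lintegral_mono_ae ((ae_restrict_iff' measurableSet_Ioi).2
          (Filter.Eventually.of_forall comp))
    _ = ENNReal.ofReal θ * ∫⁻ t in Set.Ioi (0:ℝ),
          volume {z : EuclideanSpace ℝ (Fin n) | t < c * Real.exp (-‖z‖ ^ 2 / (4 * r ^ 2))} :=
        lintegral_const_mul' _ _ ENNReal.ofReal_ne_top
    _ = ENNReal.ofReal θ * 1 := by rw [← L2, hGl]
    _ = ENNReal.ofReal θ := mul_one _
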